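/- The function λ ↦ (λ·log(1/λ)) / H₂(λ) is antitone (monotonically nonincreasing) on the open interval (0,1). -/

import Mathlib

/-- Binary entropy function with natural logarithm. -/
noncomputable def binH (q : ℝ) : ℝ := -q * Real.log q - (1 - q) * Real.log (1 - q)

lemma binH_pos {t : ℝ} (ht0 : 0 < t) (ht1 : t < 1) : 0 < binH t := by
  have h1 : Real.log t < 0 := Real.log_neg ht0 ht1
  have h2 : Real.log (1 - t) < 0 := Real.log_neg (by linarith) (by linarith)
  unfold binH
  nlinarith

lemma key_ineq {t : ℝ} (ht0 : 0 < t) (ht1 : t < 1) :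
    (1 + Real.log t) * ((1 - t) * Real.log (1 - t)) +
      (t * Real.log t) * (1 + Real.log (1 - t)) ≤ 0 := by
  set a : ℝ := -Real.log t with ha'
  set b : ℝ := -Real.log (1 - t) with hb'
  have ha : 0 < a := by have := Real.log_neg ht0 ht1; linarith
  have hb : 0 < b := by
    have := Real.log_neg (x := 1 - t) (by linarith) (by linarith); linarith
  have hu : (1 - t) * b ≤ t := by
    have h := Real.log_le_sub_one_of_pos (x := (1 - t)⁻¹) (inv_pos.mpr (by linarith))
    rw [Real.log_inv] at h
    have hb2 : b ≤ (1 - t)⁻¹ - 1 := by simpa [hb'] using h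
    have h3 : (1 - t) * b ≤ (1 - t) * ((1 - t)⁻¹ - 1) := by
      apply mul_le_mul_of_nonneg_left hb2 (by linarith)
    have h4 : (1 - t) * ((1 - t)⁻¹ - 1) = t := by
      rw [mul_sub, mul_inv_cancel₀ (by linarith : (1:ℝ) - t ≠ 0)]; ring
    exact le_of_le_of_eq h3 h4
  have hv : t * a ≤ 1 - t := by
    have h := Real.log_le_sub_one_of_pos (x := t⁻¹) (inv_pos.mpr ht0)
    rw [Real.log_inv] at h
    have hb2 : a ≤ t⁻¹ - 1 := by simpa [ha'] using h
    have h3 : t * a ≤ t * (t⁻¹ - 1) := by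
      apply mul_le_mul_of_nonneg_left hb2 (by linarith)
    have h4 : t * (t⁻¹ - 1) = 1 - t := by
      rw [mul_sub, mul_inv_cancel₀ ht0.ne']; ring
    exact le_of_le_of_eq h3 h4
  have hlt : Real.log t = -a := by rw [ha']; ring
  have hlb : Real.log (1 - t) = -b := by rw [hb']; ring
  rw [hlt, hlb]
  have hab : a * b ≤ 1 := by
    nlinarith
  rcases le_or_gt a 1 with hA | hA
  · rcases le_or_gt b 1 with hB | hB
    · nlinarith
    · nlinarith
  · have hB : b < 1 := by nlinarith
    nlinarith

lemma hasDerivAt_oneSub_mul_log {t : ℝ} (ht1 : t < 1) :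
    HasDerivAt (fun l : ℝ => (1 - l) * Real.log (1 - l)) (-(Real.log (1 - t) + 1)) t := by
  have h := (Real.hasDerivAt_mul_log (x := 1 - t) (by linarith)).comp t
    ((hasDerivAt_const t (1:ℝ)).sub (hasDerivAt_id t))
  simpa [Function.comp_def] using h

lemma hasDerivAt_binH {t : ℝ} (ht0 : 0 < t) (ht1 : t < 1) :
    HasDerivAt binH (Real.log (1 - t) - Real.log t) t := by
  have h1 := (Real.hasDerivAt_mul_log ht0.ne').neg
  have h2 := hasDerivAt_oneSub_mul_log ht1
  have h3 := h1.sub h2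
  have he : binH = fun l : ℝ => -(l * Real.log l) - (1 - l) * Real.log (1 - l) := by
    funext l; unfold binH; ring
  rw [he]
  refine h3.congr_deriv ?_
  ring

lemma hasDerivAt_num {t : ℝ} (ht0 : 0 < t) :
    HasDerivAt (fun l : ℝ => l * Real.log (1 / l)) (-(Real.log t + 1)) t := by
  have he : (fun l : ℝ => l * Real.log (1 / l)) = fun l : ℝ => -(l * Real.log l) := by
    funext l; rw [one_div, Real.log_inv]; ring
  rw [he]
  exact (Real.hasDerivAt_mul_log ht0.ne').neg

theorem antitone_ratio_entropy :
    AntitoneOn (fun l : ℝ => (l * Real.log (1 / l)) / binH l) (Set.Ioo 0 1) := by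
  have hderiv : ∀ t ∈ Set.Ioo (0:ℝ) 1,
      HasDerivAt (fun l : ℝ => (l * Real.log (1 / l)) / binH l)
        (((-(Real.log t + 1)) * binH t - (t * Real.log (1 / t)) *
          (Real.log (1 - t) - Real.log t)) / (binH t) ^ 2) t := by
    intro t ht
    exact (hasDerivAt_num ht.1).div (hasDerivAt_binH ht.1 ht.2) (binH_pos ht.1 ht.2).ne'
  have hdiff : DifferentiableOn ℝ (fun l : ℝ => (l * Real.log (1 / l)) / binH l) (Set.Ioo 0 1) :=
    fun t ht => ((hderiv t ht).differentiableAt).differentiableWithinAt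
  apply antitoneOn_of_deriv_nonpos (convex_Ioo 0 1) hdiff.continuousOn
  · rwa [interior_Ioo]
  · intro t ht
    rw [interior_Ioo] at ht
    rw [(hderiv t ht).deriv]
    apply div_nonpos_of_nonpos_of_nonneg _ (sq_nonneg _)
    have hnum : (-(Real.log t + 1)) * binH t - (t * Real.log (1 / t)) *
        (Real.log (1 - t) - Real.log t) =
        (1 + Real.log t) * ((1 - t) * Real.log (1 - t)) +
          (t * Real.log t) * (1 + Real.log (1 - t)) := by
      rw [one_div, Real.log_inv]; unfold binH; ring
    rw [hnum]
    exact key_ineq ht.1 ht.2
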